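/- arXiv:1801.08560 — 4 statements merged into one kernel-verified Lean document; each statement's English description precedes it below -/
import Mathlib

section
/- The equation 1 = e^{-s}(s³/2 + s²/2 + s + 1) has a unique solution s₀ in the interval (0, ∞), and this solution satisfies 3.38 < s₀ < 3.39. -/
open Real

noncomputable def ff (s : ℝ) : ℝ := Real.exp (-s) * (s ^ 3 / 2 + s ^ 2 / 2 + s + 1)

lemma ff_deriv (s : ℝ) : HasDerivAt ff (Real.exp (-s) * (s ^ 2 - s ^ 3 / 2)) s := by
  have h1 : HasDerivAt (fun x : ℝ => Real.exp (-x)) (Real.exp (-s) * (-1)) s :=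
    (hasDerivAt_id s).neg.exp
  have h2 : HasDerivAt (fun x : ℝ => x ^ 3 / 2 + x ^ 2 / 2 + x + 1)
      ((3 : ℕ) * s ^ 2 / 2 + (2 : ℕ) * s ^ 1 / 2 + 1) s :=
    ((((hasDerivAt_pow 3 s).div_const 2).add ((hasDerivAt_pow 2 s).div_const 2)).add
      (hasDerivAt_id s)).add_const 1
  have : HasDerivAt ff _ s := h1.mul h2
  convert this using 1
  push_cast
  ring

lemma ff_cont : Continuous ff := by
  unfold ff
  continuity

lemma ff_anti : StrictAntiOn ff (Set.Ici (2 : ℝ)) := by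
  apply strictAntiOn_of_deriv_neg (convex_Ici 2) ff_cont.continuousOn
  intro x hx
  rw [interior_Ici] at hx
  rw [(ff_deriv x).deriv]
  have hx2 : (2 : ℝ) < x := hx
  have : x ^ 2 - x ^ 3 / 2 < 0 := by
    nlinarith [mul_pos (mul_pos (by linarith : (0:ℝ) < x) (by linarith : (0:ℝ) < x))
      (by linarith : (0:ℝ) < x - 2)]
  have := Real.exp_pos (-x)
  nlinarith

lemma ff_gt_one {s : ℝ} (h0 : 0 < s) (h2 : s ≤ 2) : 1 < ff s := by
  have hmono : StrictMonoOn ff (Set.Icc (0 : ℝ) 2) := by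
    apply strictMonoOn_of_deriv_pos (convex_Icc 0 2) ff_cont.continuousOn
    intro x hx
    rw [interior_Icc] at hx
    rw [(ff_deriv x).deriv]
    have hx1 : (0 : ℝ) < x := hx.1
    have hx2 : x < 2 := hx.2
    have : 0 < x ^ 2 - x ^ 3 / 2 := by
      nlinarith [mul_pos (mul_pos hx1 hx1) (by linarith : (0:ℝ) < 2 - x)]
    have := Real.exp_pos (-x)
    nlinarith
  have : ff 0 < ff s := hmono ⟨le_refl 0, by norm_num⟩ ⟨h0.le, h2⟩ h0
  simpa [ff] using this

lemma exp_038_lt : Real.exp 0.38 < 1.4623 := by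
  have h := Real.exp_bound' (x := 0.38) (by norm_num) (by norm_num) (n := 5) (by norm_num)
  calc Real.exp 0.38 ≤ _ := h
    _ < 1.4623 := by
        simp only [Finset.sum_range_succ, Finset.sum_range_zero]
        norm_num [Nat.factorial]

lemma exp_039_gt : (1.4768 : ℝ) < Real.exp 0.39 := by
  have h := Real.exp_bound (x := 0.39) (by rw [abs_of_nonneg] <;> norm_num) (n := 5) (by norm_num)
  have h' := (abs_sub_le_iff.1 h).2
  have : (∑ m ∈ Finset.range 5, (0.39 : ℝ) ^ m / m.factorial) -
      |(0.39 : ℝ)| ^ 5 * ((5 : ℕ).succ / ((5 : ℕ).factorial * 5)) ≤ Real.exp 0.39 := by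
    linarith
  refine lt_of_lt_of_le ?_ this
  rw [abs_of_nonneg (by norm_num : (0.39:ℝ) ≥ 0)]
  simp only [Finset.sum_range_succ, Finset.sum_range_zero]
  norm_num [Nat.factorial]

lemma exp_three : Real.exp 3 = Real.exp 1 ^ 3 := by
  rw [← Real.exp_nat_mul]; norm_num

lemma exp338_lt : Real.exp 3.38 < 29.399436 := by
  have h : (3.38 : ℝ) = 3 + 0.38 := by norm_num
  rw [h, Real.exp_add, exp_three]
  have h1 : Real.exp 1 ^ 3 < 2.7182818286 ^ 3 :=
    pow_lt_pow_left₀ Real.exp_one_lt_d9 (Real.exp_pos 1).le (by norm_num)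
  have h2 := exp_038_lt
  have hp1 : (0:ℝ) < Real.exp 1 ^ 3 := by positivity
  have hp2 : (0:ℝ) < Real.exp 0.38 := Real.exp_pos _
  calc Real.exp 1 ^ 3 * Real.exp 0.38 < 2.7182818286 ^ 3 * 1.4623 := by nlinarith
    _ < 29.399436 := by norm_num

lemma exp339_gt : (29.6151595 : ℝ) < Real.exp 3.39 := by
  have h : (3.39 : ℝ) = 3 + 0.39 := by norm_num
  rw [h, Real.exp_add, exp_three]
  have h1 : (2.7182818283 : ℝ) ^ 3 < Real.exp 1 ^ 3 :=
    pow_lt_pow_left₀ Real.exp_one_gt_d9 (by norm_num) (by norm_num)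
  have h2 := exp_039_gt
  have hp2 : (0:ℝ) < Real.exp 0.39 := Real.exp_pos _
  calc (29.6151595 : ℝ) < 2.7182818283 ^ 3 * 1.4768 := by norm_num
    _ < Real.exp 1 ^ 3 * Real.exp 0.39 := by nlinarith

lemma ff_338 : 1 < ff 3.38 := by
  unfold ff
  rw [Real.exp_neg, inv_mul_eq_div, lt_div_iff₀ (Real.exp_pos _), one_mul]
  calc Real.exp 3.38 < 29.399436 := exp338_lt
    _ = (3.38:ℝ) ^ 3 / 2 + 3.38 ^ 2 / 2 + 3.38 + 1 := by norm_num

lemma ff_339 : ff 3.39 < 1 := by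
  unfold ff
  rw [Real.exp_neg, inv_mul_eq_div, div_lt_one (Real.exp_pos _)]
  calc (3.39:ℝ) ^ 3 / 2 + 3.39 ^ 2 / 2 + 3.39 + 1 = 29.6151595 := by norm_num
    _ < Real.exp 3.39 := exp339_gt

theorem stmt_5 :
    ∃ s₀ : ℝ, 0 < s₀ ∧
      Real.exp (-s₀) * (s₀ ^ 3 / 2 + s₀ ^ 2 / 2 + s₀ + 1) = 1 ∧
      (3.38 : ℝ) < s₀ ∧ s₀ < 3.39 ∧
      ∀ s : ℝ, 0 < s → Real.exp (-s) * (s ^ 3 / 2 + s ^ 2 / 2 + s + 1) = 1 → s = s₀ := by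
  have hroot2 : ∀ s : ℝ, 0 < s → ff s = 1 → 2 < s := by
    intro s hs hfs
    by_contra h
    push_neg at h
    exact (ne_of_gt (ff_gt_one hs h)) hfs
  -- existence via IVT
  have hsub := intermediate_value_Icc' (by norm_num : (3.38:ℝ) ≤ 3.39)
    (ff_cont.continuousOn (s := Set.Icc 3.38 3.39))
  have h1 : (1 : ℝ) ∈ Set.Icc (ff 3.39) (ff 3.38) := ⟨ff_339.le, ff_338.le⟩
  obtain ⟨s₀, hs₀mem, hs₀⟩ := hsub h1
  have hlt1 : (3.38 : ℝ) < s₀ := by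
    rcases lt_or_eq_of_le hs₀mem.1 with h | h
    · exact h
    · exfalso; rw [← h] at hs₀; exact (ne_of_gt ff_338) hs₀
  have hlt2 : s₀ < 3.39 := by
    rcases lt_or_eq_of_le hs₀mem.2 with h | h
    · exact h
    · exfalso; rw [h] at hs₀; exact absurd hs₀ (ne_of_lt ff_339)
  have hpos : 0 < s₀ := by linarith
  refine ⟨s₀, hpos, hs₀, hlt1, hlt2, ?_⟩
  intro s hs hfs
  have hfs' : ff s = 1 := hfs
  have h2s : 2 < s := hroot2 s hs hfs'
  have h2s₀ : 2 < s₀ := by linarith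
  exact ff_anti.injOn h2s.le h2s₀.le (by rw [hfs', hs₀])
end

section
/- Let λ > 0 and let g(t) = e^{-λt}(1 + λt + (λt)²/2). Let s₀ be the unique positive solution of 1 = e^{-s}(s³/2 + s²/2 + s + 1) and set t₀ = s₀/λ. Define g_con(t) = g(t) for t > t₀ and g_con(t) = g(t₀) + (t - t₀)g'(t₀) for 0 ≤ t ≤ t₀. Then g_con is convex on [0, ∞). -/
open Real

-- step 1: exp s < poly on (0,2]
lemma exp_lt_poly_aux {s : ℝ} (h0 : 0 < s) (h2 : s ≤ 2) :
    Real.exp s < s ^ 3 / 2 + s ^ 2 / 2 + s + 1 := by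
  set u := s / 2 with hu
  have hup : 0 < u := by positivity
  have hu1 : u ≤ 1 := by rw [hu]; linarith
  have hb := Real.exp_bound' hup.le hu1 (n := 4) (by norm_num)
  have hb' : Real.exp u ≤ 1 + u + u ^ 2 / 2 + u ^ 3 / 6 + 5 * u ^ 4 / 96 := by
    norm_num [Finset.sum_range_succ, Nat.factorial] at hb
    linarith
  have hs : s = 2 * u := by rw [hu]; ring
  have hexp : Real.exp s = Real.exp u * Real.exp u := by rw [hs, two_mul, Real.exp_add]
  have hpos : 0 < Real.exp u := Real.exp_pos u
  have key : (1 + u + u ^ 2 / 2 + u ^ 3 / 6 + 5 * u ^ 4 / 96) ^ 2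
      < (2 * u) ^ 3 / 2 + (2 * u) ^ 2 / 2 + 2 * u + 1 := by
    nlinarith [sq_nonneg u, sq_nonneg (u - 1), sq_nonneg (u ^ 2), pow_le_one₀ hup.le hu1 (n := 4),
      mul_pos hup hup, sq_nonneg (u ^ 2 - u), sq_nonneg (u ^ 3)]
  calc Real.exp s = Real.exp u * Real.exp u := hexp
    _ ≤ (1 + u + u ^ 2 / 2 + u ^ 3 / 6 + 5 * u ^ 4 / 96) ^ 2 := by nlinarith [hb', hpos.le]
    _ < (2 * u) ^ 3 / 2 + (2 * u) ^ 2 / 2 + 2 * u + 1 := key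
    _ = s ^ 3 / 2 + s ^ 2 / 2 + s + 1 := by rw [hs]

lemma aux_convex (lam t₀ : ℝ) (hlam : 0 < lam) (ht₀ : 2 / lam < t₀) :
    ConvexOn ℝ (Set.Ici (0 : ℝ)) (fun t : ℝ =>
      if t ≤ t₀ then
        Real.exp (-lam * t₀) * (1 + lam * t₀ + (lam * t₀) ^ 2 / 2)
          + (t - t₀) * (-(lam ^ 3 / 2) * t₀ ^ 2 * Real.exp (-lam * t₀))
      else Real.exp (-lam * t) * (1 + lam * t + (lam * t) ^ 2 / 2)) := by
  have ht₀pos : 0 < t₀ := lt_trans (by positivity) ht₀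
  let g : ℝ → ℝ := fun t => Real.exp (-lam * t) * (1 + lam * t + (lam * t) ^ 2 / 2)
  let m : ℝ := -(lam ^ 3 / 2) * t₀ ^ 2 * Real.exp (-lam * t₀)
  let F : ℝ → ℝ := fun t => if t ≤ t₀ then g t₀ + (t - t₀) * m else g t
  let Df : ℝ → ℝ := fun t => -(lam ^ 3 / 2) * t ^ 2 * Real.exp (-lam * t)
  show ConvexOn ℝ (Set.Ici (0 : ℝ)) F
  -- derivative of g
  have hexp : ∀ t : ℝ, HasDerivAt (fun t => Real.exp (-lam * t))
      (Real.exp (-lam * t) * (-lam * 1)) t := fun t =>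
    ((hasDerivAt_id t).const_mul (-lam)).exp
  have hgd : ∀ t : ℝ, HasDerivAt g (Df t) t := by
    intro t
    have hpoly : HasDerivAt (fun t : ℝ => 1 + lam * t + (lam * t) ^ 2 / 2)
        (0 + lam * 1 + 2 * (lam * t) ^ 1 * (lam * 1) / 2) t := by
      exact (((hasDerivAt_const t (1:ℝ)).add ((hasDerivAt_id t).const_mul lam)).add
        ((((hasDerivAt_id t).const_mul lam).pow 2).div_const 2))
    have h := (hexp t).mul hpoly
    refine h.congr_deriv ?_
    simp only [Df]
    ring
  -- derivative of Df
  have hDfd : ∀ t : ℝ, HasDerivAt Df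
      (-(lam ^ 3 / 2) * ((2 * t - lam * t ^ 2) * Real.exp (-lam * t))) t := by
    intro t
    have h := (((hasDerivAt_id t).pow 2).mul (hexp t)).const_mul (-(lam ^ 3 / 2))
    have heq : Df = fun y : ℝ => -(lam ^ 3 / 2) * (y ^ 2 * Real.exp (-lam * y)) := by
      funext y; simp only [Df]; ring
    rw [heq]
    refine h.congr_deriv ?_
    norm_num only [Pi.pow_apply, id_eq]
    ring
  -- Df is monotone on [t₀, ∞)
  have monDf : MonotoneOn Df (Set.Ici t₀) := by
    apply monotoneOn_of_deriv_nonneg (convex_Ici t₀)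
    · exact fun x _ => ((hDfd x).continuousAt).continuousWithinAt
    · exact fun x _ => (hDfd x).differentiableAt.differentiableWithinAt
    · intro x hx
      rw [interior_Ici] at hx
      rw [(hDfd x).deriv]
      have hx2 : 2 / lam < x := lt_trans ht₀ hx
      have h2x : 2 < lam * x := by
        rw [div_lt_iff₀ hlam] at hx2; linarith [hx2]
      have hxpos : 0 < x := lt_trans ht₀pos hx
      have h1 : 2 * x - lam * x ^ 2 ≤ 0 := by nlinarith
      have h2 : (2 * x - lam * x ^ 2) * Real.exp (-lam * x) ≤ 0 :=
        mul_nonpos_of_nonpos_of_nonneg h1 (Real.exp_pos _).le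
      nlinarith [h2, pow_pos hlam 3]
  -- derivative of F
  have hFd : ∀ t : ℝ, HasDerivAt F (if t ≤ t₀ then m else Df t) t := by
    intro t
    have hlin : ∀ s : ℝ, HasDerivAt (fun x : ℝ => g t₀ + (x - t₀) * m) m s := by
      intro s
      have := (((hasDerivAt_id s).sub_const t₀).mul_const m).const_add (g t₀)
      simpa using this
    rcases lt_trichotomy t t₀ with h | h | h
    · rw [if_pos h.le]
      refine (hlin t).congr_of_eventuallyEq ?_
      filter_upwards [Iio_mem_nhds h] with x hx
      simp only [F]
      rw [if_pos (le_of_lt (Set.mem_Iio.mp hx))]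
    · subst h
      rw [if_pos le_rfl]
      have hIic : HasDerivWithinAt F m (Set.Iic t) t := by
        refine ((hlin t).hasDerivWithinAt).congr ?_ ?_
        · intro x hx; simp only [F, if_pos (Set.mem_Iic.mp hx)]
        · simp only [F, if_pos le_rfl]
      have hIci : HasDerivWithinAt F m (Set.Ici t) t := by
        have hm : m = Df t := by simp only [m, Df]
        rw [hm]
        refine ((hgd t).hasDerivWithinAt).congr ?_ ?_
        · intro x hx
          by_cases hx' : x ≤ t
          · have hxe : x = t := le_antisymm hx' (Set.mem_Ici.mp hx)
            subst hxe
            simp only [F, if_pos le_rfl, sub_self, zero_mul, add_zero]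
          · simp only [F, if_neg hx']
        · simp only [F, if_pos le_rfl, sub_self, zero_mul, add_zero]
      have := hIic.union hIci
      rwa [Set.Iic_union_Ici, hasDerivWithinAt_univ] at this
    · rw [if_neg (not_le.mpr h)]
      refine (hgd t).congr_of_eventuallyEq ?_
      filter_upwards [Ioi_mem_nhds h] with x hx
      simp only [F]
      rw [if_neg (not_le.mpr (Set.mem_Ioi.mp hx))]
  -- monotone derivative
  have monφ : MonotoneOn (deriv F) (interior (Set.Ici (0:ℝ))) := by
    intro x _ y _ hxy
    rw [(hFd x).deriv, (hFd y).deriv]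
    by_cases hy : y ≤ t₀
    · rw [if_pos (hxy.trans hy), if_pos hy]
    · rw [if_neg hy]
      push_neg at hy
      by_cases hx : x ≤ t₀
      · rw [if_pos hx]
        have hm : m = Df t₀ := by simp only [m, Df]
        rw [hm]
        exact monDf (Set.self_mem_Ici) (Set.mem_Ici.mpr hy.le) hy.le
      · rw [if_neg hx]
        push_neg at hx
        exact monDf (Set.mem_Ici.mpr hx.le) (Set.mem_Ici.mpr (lt_of_lt_of_le hx hxy).le) hxy
  exact monφ.convexOn_of_deriv (convex_Ici 0)
    (fun x _ => ((hFd x).continuousAt).continuousWithinAt)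
    (fun x _ => (hFd x).differentiableAt.differentiableWithinAt)

theorem stmt_6 (lam : ℝ) (hlam : 0 < lam) (s₀ : ℝ) (hs₀ : 0 < s₀)
    (hroot : Real.exp (-s₀) * (s₀ ^ 3 / 2 + s₀ ^ 2 / 2 + s₀ + 1) = 1) :
    ConvexOn ℝ (Set.Ici (0 : ℝ))
      (fun t : ℝ =>
        if t ≤ s₀ / lam then
          Real.exp (-lam * (s₀ / lam)) * (1 + lam * (s₀ / lam) + (lam * (s₀ / lam)) ^ 2 / 2)
            + (t - s₀ / lam) * (-(lam ^ 3 / 2) * (s₀ / lam) ^ 2 * Real.exp (-lam * (s₀ / lam)))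
        else
          Real.exp (-lam * t) * (1 + lam * t + (lam * t) ^ 2 / 2)) := by
  have hs2 : 2 < s₀ := by
    by_contra h
    push_neg at h
    have hlt := exp_lt_poly_aux hs₀ h
    have hP : s₀ ^ 3 / 2 + s₀ ^ 2 / 2 + s₀ + 1 = Real.exp s₀ := by
      have h1 := congrArg (fun x => Real.exp s₀ * x) hroot
      simp only [← mul_assoc, ← Real.exp_add, add_neg_cancel, Real.exp_zero, one_mul,
        mul_one] at h1
      exact h1
    linarith
  exact aux_convex lam (s₀ / lam) hlam ((div_lt_div_iff_of_pos_right hlam).mpr hs2)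
end

section
/- Let λ > 0, let g(t) = e^{-λt}(1 + λt + (λt)²/2), and let g_con be as defined (equal to g for t > t₀ and equal to the tangent line through (0,1) for 0 ≤ t ≤ t₀, where t₀ = s₀/λ and s₀ ≈ 3.3836 is the tangency point). Then g_con(t) ≤ g(t) for all t ≥ 0. -/
open Real

private lemma hasDerivAt_phi (x : ℝ) :
    HasDerivAt (fun x : ℝ => Real.exp (-x) * (x ^ 3 / 2 + x ^ 2 / 2 + x + 1))
      (Real.exp (-x) * (x ^ 2 * (1 - x / 2))) x := by
  have he : HasDerivAt (fun x : ℝ => Real.exp (-x)) (Real.exp (-x) * (-1)) x :=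
    ((hasDerivAt_id x).neg).exp
  have hp : HasDerivAt (fun x : ℝ => x ^ 3 / 2 + x ^ 2 / 2 + x + 1)
      (3 * x ^ 2 / 2 + x + 1) x := by
    have := (((hasDerivAt_pow 3 x).div_const 2).add ((hasDerivAt_pow 2 x).div_const 2)).add
      (hasDerivAt_id x) |>.add_const 1
    refine this.congr_deriv ?_
    ring
  have := he.mul hp
  refine this.congr_deriv ?_
  ring

private lemma s0_gt_two (s₀ : ℝ) (hs₀ : 0 < s₀)
    (hroot : Real.exp (-s₀) * (s₀ ^ 3 / 2 + s₀ ^ 2 / 2 + s₀ + 1) = 1) : 2 < s₀ := by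
  by_contra h
  push_neg at h
  have hmono : StrictMonoOn (fun x : ℝ => Real.exp (-x) * (x ^ 3 / 2 + x ^ 2 / 2 + x + 1))
      (Set.Icc (0:ℝ) 2) := by
    apply strictMonoOn_of_hasDerivWithinAt_pos (convex_Icc 0 2)
    · exact (Continuous.mul (Real.continuous_exp.comp continuous_neg)
        (by continuity)).continuousOn
    · intro x hx
      exact (hasDerivAt_phi x).hasDerivWithinAt
    · intro x hx
      rw [interior_Icc] at hx
      have h1 : (0:ℝ) < Real.exp (-x) := Real.exp_pos _
      have h2 : 0 < x ^ 2 := pow_pos hx.1 2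
      have h3 : 0 < 1 - x / 2 := by linarith [hx.2]
      exact mul_pos h1 (mul_pos h2 h3)
  have h0 : (0:ℝ) ∈ Set.Icc (0:ℝ) 2 := by constructor <;> norm_num
  have hs : s₀ ∈ Set.Icc (0:ℝ) 2 := ⟨le_of_lt hs₀, h⟩
  have := hmono h0 hs hs₀
  simp only [neg_zero, Real.exp_zero] at this
  rw [hroot] at this
  norm_num at this

private lemma key_ineq (s₀ : ℝ) (hs₀ : 0 < s₀)
    (hroot : Real.exp (-s₀) * (s₀ ^ 3 / 2 + s₀ ^ 2 / 2 + s₀ + 1) = 1)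
    (s : ℝ) (hs : 0 ≤ s) (hss : s ≤ s₀) :
    1 - s * (s₀ ^ 2 / 2 * Real.exp (-s₀)) ≤ Real.exp (-s) * (1 + s + s ^ 2 / 2) := by
  have h2 : 2 < s₀ := s0_gt_two s₀ hs₀ hroot
  set c : ℝ := s₀ ^ 2 / 2 * Real.exp (-s₀) with hc
  set F : ℝ → ℝ := fun x => Real.exp (-x) * (1 + x + x ^ 2 / 2) - 1 + c * x with hF
  -- derivative facts
  have hF' : ∀ x : ℝ, HasDerivAt F (c - Real.exp (-x) * x ^ 2 / 2) x := by
    intro x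
    have he : HasDerivAt (fun x : ℝ => Real.exp (-x)) (Real.exp (-x) * (-1)) x :=
      ((hasDerivAt_id x).neg).exp
    have hp : HasDerivAt (fun x : ℝ => 1 + x + x ^ 2 / 2) (1 + x) x := by
      have := ((hasDerivAt_const x (1:ℝ)).add (hasDerivAt_id x)).add
        ((hasDerivAt_pow 2 x).div_const 2)
      refine this.congr_deriv ?_
      ring
    have := ((he.mul hp).sub_const 1).add ((hasDerivAt_id x).const_mul c)
    refine this.congr_deriv ?_
    ring
  have hFd' : ∀ x : ℝ, HasDerivAt (fun x => c - Real.exp (-x) * x ^ 2 / 2)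
      (Real.exp (-x) * (x ^ 2 / 2 - x)) x := by
    intro x
    have he : HasDerivAt (fun x : ℝ => Real.exp (-x)) (Real.exp (-x) * (-1)) x :=
      ((hasDerivAt_id x).neg).exp
    have := (hasDerivAt_const x c).sub ((he.mul (hasDerivAt_pow 2 x)).div_const 2)
    refine this.congr_deriv ?_
    ring
  have hFcont : Continuous F := by
    apply Continuous.add
    · exact ((Real.continuous_exp.comp continuous_neg).mul (by continuity)).sub continuous_const
    · exact continuous_const.mul continuous_id
  -- F s₀ = 0
  have hFs0 : F s₀ = 0 := by
    simp only [hF, hc]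
    nlinarith [hroot, Real.exp_pos (-s₀)]
  -- F 0 = 0
  have hF0 : F 0 = 0 := by simp [hF]
  -- ψ(x) = x^2 exp(-x) antitone on [2, s₀]
  have hpsi : AntitoneOn (fun x : ℝ => x ^ 2 * Real.exp (-x)) (Set.Icc (2:ℝ) s₀) := by
    apply antitoneOn_of_hasDerivWithinAt_nonpos (convex_Icc 2 s₀)
    · exact (continuous_pow 2 |>.mul (Real.continuous_exp.comp continuous_neg)).continuousOn
    · intro x hx
      have he : HasDerivAt (fun x : ℝ => Real.exp (-x)) (Real.exp (-x) * (-1)) x :=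
        ((hasDerivAt_id x).neg).exp
      exact (((hasDerivAt_pow 2 x).mul he)).hasDerivWithinAt
    · intro x hx
      rw [interior_Icc] at hx
      have h1 : (0:ℝ) < Real.exp (-x) := Real.exp_pos _
      have h2 : (2:ℝ) < x := hx.1
      norm_num
      nlinarith [mul_nonneg h1.le (show (0:ℝ) ≤ x ^ 2 - 2 * x by nlinarith)]
  -- F antitone on [2, s₀]
  have hFanti : AntitoneOn F (Set.Icc (2:ℝ) s₀) := by
    apply antitoneOn_of_hasDerivWithinAt_nonpos (convex_Icc 2 s₀) hFcont.continuousOn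
    · intro x hx
      exact (hF' x).hasDerivWithinAt
    · intro x hx
      rw [interior_Icc] at hx
      have := hpsi ⟨le_of_lt hx.1, le_of_lt hx.2⟩ (Set.right_mem_Icc.mpr (by linarith)) (le_of_lt hx.2)
      simp only at this
      simp only [hc]
      nlinarith
  -- F x ≥ 0 on [2, s₀]
  have hFpos2 : ∀ x ∈ Set.Icc (2:ℝ) s₀, 0 ≤ F x := by
    intro x hx
    have := hFanti hx (Set.right_mem_Icc.mpr (by linarith)) hx.2
    rw [hFs0] at this
    exact this
  -- F concave on [0, 2]
  have hconc : ConcaveOn ℝ (Set.Icc (0:ℝ) 2) F := by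
    apply concaveOn_of_hasDerivWithinAt2_nonpos (convex_Icc 0 2) hFcont.continuousOn
    · intro x hx; exact (hF' x).hasDerivWithinAt
    · intro x hx; exact (hFd' x).hasDerivWithinAt
    · intro x hx
      rw [interior_Icc] at hx
      have h1 : (0:ℝ) < Real.exp (-x) := Real.exp_pos _
      have : x ^ 2 / 2 - x ≤ 0 := by nlinarith [hx.1, hx.2]
      exact mul_nonpos_of_nonneg_of_nonpos (le_of_lt h1) this
  -- conclude F s ≥ 0
  have hFs : 0 ≤ F s := by
    rcases le_or_gt s 2 with hcase | hcase
    · -- use concavity: s = (1 - s/2) • 0 + (s/2) • 2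
      have h0m : (0:ℝ) ∈ Set.Icc (0:ℝ) 2 := by constructor <;> norm_num
      have h2m : (2:ℝ) ∈ Set.Icc (0:ℝ) 2 := by constructor <;> norm_num
      have ha : (0:ℝ) ≤ 1 - s / 2 := by linarith
      have hb : (0:ℝ) ≤ s / 2 := by linarith
      have hab : (1 - s / 2) + s / 2 = 1 := by ring
      have := hconc.2 h0m h2m ha hb hab
      simp only [smul_eq_mul] at this
      have heq : (1 - s / 2) * 0 + s / 2 * 2 = s := by ring
      rw [heq] at this
      have hF2 : 0 ≤ F 2 := hFpos2 2 ⟨le_refl 2, by linarith⟩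
      rw [hF0, mul_zero, zero_add] at this
      exact le_trans (mul_nonneg hb hF2) this
    · exact hFpos2 s ⟨le_of_lt hcase, hss⟩
  simp only [hF] at hFs
  rw [hc]
  nlinarith [hFs]

theorem stmt_7 (lam : ℝ) (hlam : 0 < lam) (s₀ : ℝ) (hs₀ : 0 < s₀)
    (hroot : Real.exp (-s₀) * (s₀ ^ 3 / 2 + s₀ ^ 2 / 2 + s₀ + 1) = 1) (t : ℝ) (ht : 0 ≤ t) :
    (if t ≤ s₀ / lam then
        Real.exp (-lam * (s₀ / lam)) * (1 + lam * (s₀ / lam) + (lam * (s₀ / lam)) ^ 2 / 2)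
          + (t - s₀ / lam) * (-(lam ^ 3 / 2) * (s₀ / lam) ^ 2 * Real.exp (-lam * (s₀ / lam)))
      else
        Real.exp (-lam * t) * (1 + lam * t + (lam * t) ^ 2 / 2))
      ≤ Real.exp (-lam * t) * (1 + lam * t + (lam * t) ^ 2 / 2) := by
  have hl : lam ≠ 0 := ne_of_gt hlam
  split_ifs with hcase
  · have h1 : -lam * (s₀ / lam) = -s₀ := by
      field_simp
    have h2 : lam * (s₀ / lam) = s₀ := by field_simp
    have h3 : -lam * t = -(lam * t) := by ring
    rw [h1, h2, h3]
    have hs : 0 ≤ lam * t := by positivity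
    have hss : lam * t ≤ s₀ := by
      rw [le_div_iff₀ hlam] at hcase
      linarith [hcase]
    have hkey := key_ineq s₀ hs₀ hroot (lam * t) hs hss
    have h4 : (t - s₀ / lam) * (-(lam ^ 3 / 2) * (s₀ / lam) ^ 2 * Real.exp (-s₀))
        = -((lam * t - s₀) * (s₀ ^ 2 / 2) * Real.exp (-s₀)) := by
      field_simp
    have heq : Real.exp (-s₀) * (1 + s₀ + s₀ ^ 2 / 2)
        + (t - s₀ / lam) * (-(lam ^ 3 / 2) * (s₀ / lam) ^ 2 * Real.exp (-s₀))
        = 1 - lam * t * (s₀ ^ 2 / 2 * Real.exp (-s₀)) := by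
      rw [h4]
      linear_combination hroot
    rw [heq]
    exact hkey
  · exact le_refl _
end

section
/- Let λ > 0, let g(t) = e^{-λt}(1 + λt + (λt)²/2), and let A be a nonnegative, bounded random variable. Let s₀ be the unique positive root of 1 = e^{-s}(s³/2 + s²/2 + s + 1). If λ·E[A] ≥ s₀, then g(E[A]) ≤ E[g(A)]. -/
open Real MeasureTheory

noncomputable def gg (s : ℝ) : ℝ := Real.exp (-s) * (1 + s + s ^ 2 / 2)

lemma exp_neg_hasDeriv (s : ℝ) : HasDerivAt (fun s : ℝ => Real.exp (-s)) (-Real.exp (-s)) s := by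
  exact ((Real.hasDerivAt_exp (-s)).comp s ((hasDerivAt_id s).neg)).congr_deriv (by simp)

lemma gg_hasDeriv (s : ℝ) : HasDerivAt gg (-(Real.exp (-s) * s ^ 2 / 2)) s := by
  have h2 : HasDerivAt (fun s : ℝ => 1 + s + s ^ 2 / 2) (1 + s) s := by
    have := ((hasDerivAt_const s (1:ℝ)).add (hasDerivAt_id s)).add ((hasDerivAt_pow 2 s).div_const 2)
    refine this.congr_deriv ?_
    ring
  have := (exp_neg_hasDeriv s).mul h2
  refine this.congr_deriv ?_
  ring

lemma psi_hasDeriv (s : ℝ) :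
    HasDerivAt (fun s : ℝ => Real.exp (-s) * s ^ 2 / 2) (Real.exp (-s) * (s - s ^ 2 / 2)) s := by
  have := ((exp_neg_hasDeriv s).mul (hasDerivAt_pow 2 s)).div_const 2
  refine this.congr_deriv ?_
  ring

lemma psi_anti : AntitoneOn (fun s : ℝ => Real.exp (-s) * s ^ 2 / 2) (Set.Ici 2) := by
  apply antitoneOn_of_deriv_nonpos (convex_Ici 2)
  · exact (Continuous.mul (by continuity) (by continuity)).continuousOn
  · exact fun x _ => (psi_hasDeriv x).differentiableAt.differentiableWithinAt
  · intro x hx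
    rw [interior_Ici] at hx
    rw [(psi_hasDeriv x).deriv]
    have hx2 : (2:ℝ) < x := hx
    have : x - x ^ 2 / 2 ≤ 0 := by nlinarith
    have he : 0 < Real.exp (-x) := Real.exp_pos _
    nlinarith

noncomputable def phi (s : ℝ) : ℝ := Real.exp (-s) * (s ^ 3 / 2 + s ^ 2 / 2 + s + 1)

lemma phi_hasDeriv (s : ℝ) : HasDerivAt phi (Real.exp (-s) * (s ^ 2 - s ^ 3 / 2)) s := by
  have h2 : HasDerivAt (fun s : ℝ => s ^ 3 / 2 + s ^ 2 / 2 + s + 1)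
      (3 * s ^ 2 / 2 + s + 1) s := by
    have := ((((hasDerivAt_pow 3 s).div_const 2).add ((hasDerivAt_pow 2 s).div_const 2)).add
      (hasDerivAt_id s)).add_const 1
    refine this.congr_deriv ?_
    ring
  have := (exp_neg_hasDeriv s).mul h2
  have heq : HasDerivAt phi (-Real.exp (-s) * (s ^ 3 / 2 + s ^ 2 / 2 + s + 1) + Real.exp (-s) * (3 * s ^ 2 / 2 + s + 1)) s := this
  convert heq using 1
  ring

lemma phi_anti : AntitoneOn phi (Set.Ici 2) := by
  apply antitoneOn_of_deriv_nonpos (convex_Ici 2)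
  · exact Continuous.continuousOn (by unfold phi; continuity)
  · exact fun x _ => (phi_hasDeriv x).differentiableAt.differentiableWithinAt
  · intro x hx
    rw [interior_Ici] at hx
    rw [(phi_hasDeriv x).deriv]
    have hx2 : (2:ℝ) < x := hx
    have : x ^ 2 - x ^ 3 / 2 ≤ 0 := by nlinarith
    have he : 0 < Real.exp (-x) := Real.exp_pos _
    nlinarith

lemma phi_mono : StrictMonoOn phi (Set.Icc 0 2) := by
  apply strictMonoOn_of_deriv_pos (convex_Icc 0 2)
  · exact Continuous.continuousOn (by unfold phi; continuity)
  · intro x hx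
    rw [interior_Icc] at hx
    rw [(phi_hasDeriv x).deriv]
    have hx0 : (0:ℝ) < x := hx.1
    have hx2 : x < 2 := hx.2
    have hx2' : 0 < x ^ 2 := by positivity
    have : 0 < x ^ 2 - x ^ 3 / 2 := by nlinarith
    have he : 0 < Real.exp (-x) := Real.exp_pos _
    nlinarith

lemma gg_concave : ConcaveOn ℝ (Set.Icc 0 2) gg := by
  have hderiv : deriv gg = fun x => -(Real.exp (-x) * x ^ 2 / 2) :=
    funext fun x => (gg_hasDeriv x).deriv
  apply concaveOn_of_deriv2_nonpos (convex_Icc 0 2)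
  · exact Continuous.continuousOn (by unfold gg; continuity)
  · exact fun x _ => (gg_hasDeriv x).differentiableAt.differentiableWithinAt
  · rw [hderiv]
    exact fun x _ => ((psi_hasDeriv x).neg).differentiableAt.differentiableWithinAt
  · intro x hx
    rw [interior_Icc] at hx
    have hit : deriv^[2] gg = deriv (deriv gg) := rfl
    rw [hit, hderiv]
    have : deriv (fun x : ℝ => -(Real.exp (-x) * x ^ 2 / 2)) x = -(Real.exp (-x) * (x - x ^ 2 / 2)) := by
      rw [deriv.fun_neg, (psi_hasDeriv x).deriv]
    rw [this]
    have hx0 : (0:ℝ) < x := hx.1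
    have hx2 : x < 2 := hx.2
    have : 0 ≤ x - x ^ 2 / 2 := by nlinarith
    have he : 0 < Real.exp (-x) := Real.exp_pos _
    nlinarith

/-- Key pointwise tangent-line inequality. -/
lemma tangent_le {m : ℝ} (hm : 2 < m) (hphi : phi m ≤ 1) {s : ℝ} (hs : 0 ≤ s) :
    gg m + (-(Real.exp (-m) * m ^ 2 / 2)) * (s - m) ≤ gg s := by
  set c : ℝ := -(Real.exp (-m) * m ^ 2 / 2) with hc
  set F : ℝ → ℝ := fun s => gg s - (gg m + c * (s - m)) with hFdef
  have hF : ∀ x : ℝ, HasDerivAt F (Real.exp (-m) * m ^ 2 / 2 - Real.exp (-x) * x ^ 2 / 2) x := by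
    intro x
    have := (gg_hasDeriv x).sub
      (HasDerivAt.const_add (gg m) (((hasDerivAt_id x).sub_const m).const_mul c))
    refine this.congr_deriv ?_
    rw [hc]; ring
  have hFm : F m = 0 := by simp [hFdef]
  have hF2m : ∀ x : ℝ, 2 ≤ x → x ≤ m → 0 ≤ F x := by
    intro x hx2 hxm
    have hanti : AntitoneOn F (Set.Icc 2 m) := by
      apply antitoneOn_of_deriv_nonpos (convex_Icc 2 m)
      · exact fun y _ => ((hF y).continuousAt).continuousWithinAt
      · exact fun y _ => (hF y).differentiableAt.differentiableWithinAt
      · intro y hy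
        rw [interior_Icc] at hy
        rw [(hF y).deriv]
        have := psi_anti (Set.mem_Ici.2 (le_of_lt hy.1)) (Set.mem_Ici.2 (le_of_lt (hy.1.trans hy.2))) (le_of_lt hy.2)
        simpa using by linarith [this]
    have := hanti (Set.mem_Icc.2 ⟨hx2, hxm⟩) (Set.mem_Icc.2 ⟨by linarith, le_refl m⟩) hxm
    rw [hFm] at this
    linarith
  -- goal is 0 ≤ F s
  suffices h : 0 ≤ F s by simpa [hFdef] using h
  rcases le_or_gt m s with hms | hsm
  · -- s ≥ m : F monotone on [m, ∞)
    have hmono : MonotoneOn F (Set.Ici m) := by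
      apply monotoneOn_of_deriv_nonneg (convex_Ici m)
      · exact fun y _ => ((hF y).continuousAt).continuousWithinAt
      · exact fun y _ => (hF y).differentiableAt.differentiableWithinAt
      · intro y hy
        rw [interior_Ici] at hy
        rw [(hF y).deriv]
        have := psi_anti (Set.mem_Ici.2 (le_of_lt hm)) (Set.mem_Ici.2 (by linarith [(Set.mem_Ioi.1 hy).le] : (2:ℝ) ≤ y)) (Set.mem_Ioi.1 hy).le
        linarith [this]
    have := hmono (Set.mem_Ici.2 (le_refl m)) (Set.mem_Ici.2 hms) hms
    rw [hFm] at this; exact this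
  · rcases le_or_gt 2 s with hs2 | hs2
    · exact hF2m s hs2 hsm.le
    · -- 0 ≤ s < 2 : use concavity of gg on [0,2]
      have hF0 : 0 ≤ F 0 := by
        have h1 : phi m = gg m + c * (0 - m) := by
          unfold phi gg; rw [hc]; ring
        have hgg0 : gg 0 = 1 := by simp [gg]
        simp only [hFdef]
        rw [hgg0, ← h1]; linarith
      have hF2 : 0 ≤ F 2 := hF2m 2 le_rfl hm.le
      -- concavity
      have hconc := gg_concave.2 (show (0:ℝ) ∈ Set.Icc (0:ℝ) 2 by norm_num)
        (show (2:ℝ) ∈ Set.Icc (0:ℝ) 2 by norm_num)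
        (show (0:ℝ) ≤ 1 - s / 2 by linarith) (show (0:ℝ) ≤ s / 2 by linarith)
        (show (1 - s / 2) + s / 2 = 1 by ring)
      simp only [smul_eq_mul] at hconc
      have hpt : (1 - s / 2) * 0 + s / 2 * 2 = s := by ring
      rw [hpt] at hconc
      -- L s = (1-s/2) L 0 + (s/2) L 2
      have hLs : gg m + c * (s - m)
          = (1 - s / 2) * (gg m + c * (0 - m)) + s / 2 * (gg m + c * (2 - m)) := by ring
      simp only [hFdef] at hF0 hF2 ⊢
      nlinarith [hF0, hF2, hconc]

theorem stmt_8 {Ω : Type*} [MeasurableSpace Ω] (μ : Measure Ω) [IsProbabilityMeasure μ]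
    (lam : ℝ) (hlam : 0 < lam)
    (A : Ω → ℝ) (hA : Measurable A) (hA0 : ∀ ω, 0 ≤ A ω) (C : ℝ) (hAC : ∀ ω, A ω ≤ C)
    (s₀ : ℝ) (hs₀ : 0 < s₀)
    (hroot : Real.exp (-s₀) * (s₀ ^ 3 / 2 + s₀ ^ 2 / 2 + s₀ + 1) = 1)
    (hmean : s₀ ≤ lam * ∫ ω, A ω ∂μ) :
    Real.exp (-lam * ∫ ω, A ω ∂μ)
        * (1 + lam * ∫ ω, A ω ∂μ + (lam * ∫ ω, A ω ∂μ) ^ 2 / 2)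
      ≤ ∫ ω, Real.exp (-lam * A ω) * (1 + lam * A ω + (lam * A ω) ^ 2 / 2) ∂μ := by
  set m : ℝ := lam * ∫ ω, A ω ∂μ with hm
  -- s₀ > 2
  have hroot' : phi s₀ = 1 := hroot
  have hs₀2 : 2 < s₀ := by
    by_contra h
    push_neg at h
    have h0 : phi 0 = 1 := by simp [phi]
    have := phi_mono (Set.mem_Icc.2 ⟨le_rfl, by norm_num⟩)
      (Set.mem_Icc.2 ⟨hs₀.le, h⟩) hs₀
    rw [h0, hroot'] at this
    exact lt_irrefl _ this
  have hm2 : 2 < m := lt_of_lt_of_le hs₀2 hmean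
  have hphim : phi m ≤ 1 := by
    have := phi_anti (Set.mem_Ici.2 hs₀2.le) (Set.mem_Ici.2 (by linarith : (2:ℝ) ≤ m)) hmean
    rw [hroot'] at this
    exact this
  set c : ℝ := -(Real.exp (-m) * m ^ 2 / 2) with hc
  have hC0 : 0 ≤ C := by
    have : Nonempty Ω := by
      by_contra h
      rw [not_nonempty_iff] at h
      have : μ Set.univ = 0 := by simp [Set.univ_eq_empty_iff.2 h]
      simp [measure_univ] at this
    obtain ⟨ω⟩ := this
    exact (hA0 ω).trans (hAC ω)
  -- integrability
  have hintA : Integrable A μ := by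
    apply (integrable_const C).mono' hA.aestronglyMeasurable
    filter_upwards with ω
    rw [Real.norm_eq_abs, abs_of_nonneg (hA0 ω)]
    exact hAC ω
  have hgmeas : Measurable fun ω => gg (lam * A ω) := by
    have hcont : Continuous gg := by unfold gg; continuity
    exact hcont.measurable.comp (hA.const_mul lam)
  have hintg : Integrable (fun ω => gg (lam * A ω)) μ := by
    apply (integrable_const (1 + lam * C + (lam * C) ^ 2 / 2)).mono' hgmeas.aestronglyMeasurable
    filter_upwards with ω
    have hx0 : 0 ≤ lam * A ω := mul_nonneg hlam.le (hA0 ω)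
    have hxC : lam * A ω ≤ lam * C := mul_le_mul_of_nonneg_left (hAC ω) hlam.le
    have he1 : Real.exp (-(lam * A ω)) ≤ 1 := Real.exp_le_one_iff.2 (by linarith)
    have hpos : 0 ≤ 1 + lam * A ω + (lam * A ω) ^ 2 / 2 := by positivity
    rw [Real.norm_eq_abs, abs_of_nonneg (by unfold gg; positivity)]
    unfold gg
    nlinarith [sq_nonneg (lam * A ω), sq_nonneg (lam * C)]
  have hintL : Integrable (fun ω => gg m + c * (lam * A ω - m)) μ := by
    apply Integrable.add (integrable_const _)
    exact (((hintA.const_mul lam).sub (integrable_const m)).const_mul c)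
  -- pointwise bound
  have hpt : ∀ ω, gg m + c * (lam * A ω - m) ≤ gg (lam * A ω) := fun ω =>
    tangent_le hm2 hphim (mul_nonneg hlam.le (hA0 ω))
  -- integral of the affine function equals gg m
  have hint1 : Integrable (fun ω => lam * A ω - m) μ := by
    have := (hintA.const_mul lam).sub (integrable_const m)
    exact this
  have hint2 : Integrable (fun ω => c * (lam * A ω - m)) μ := hint1.const_mul c
  have hint3 : Integrable (fun ω => lam * A ω) μ := hintA.const_mul lam
  have hintL_eq : ∫ ω, (gg m + c * (lam * A ω - m)) ∂μ = gg m := by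
    rw [integral_add (integrable_const _) hint2, integral_const, probReal_univ]
    rw [integral_const_mul, integral_sub hint3 (integrable_const m),
      integral_const_mul, integral_const, probReal_univ]
    simp [hm]
  have key : gg m ≤ ∫ ω, gg (lam * A ω) ∂μ := by
    rw [← hintL_eq]
    exact integral_mono hintL hintg hpt
  have hlhs : Real.exp (-lam * ∫ ω, A ω ∂μ) * (1 + m + m ^ 2 / 2) = gg m := by
    unfold gg
    rw [hm, neg_mul]
  have hrhs : ∀ ω, Real.exp (-lam * A ω) * (1 + lam * A ω + (lam * A ω) ^ 2 / 2)
      = gg (lam * A ω) := by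
    intro ω; unfold gg; rw [neg_mul]
  calc Real.exp (-lam * ∫ ω, A ω ∂μ) * (1 + m + m ^ 2 / 2) = gg m := hlhs
    _ ≤ ∫ ω, gg (lam * A ω) ∂μ := key
    _ = ∫ ω, Real.exp (-lam * A ω) * (1 + lam * A ω + (lam * A ω) ^ 2 / 2) ∂μ := by
        simp_rw [hrhs]
end
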